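/- For odd n ≥ 3, let -e₁ < -e₂ < 0 be the two real extraneous fixed points of C_n (i.e., e₁ⁿ and e₂ⁿ correspond to the two negative roots of 3n²w² + n(n+5)w + 2 = 0), and let ξ be the real pole of C_n (the nth real root of -1/n). Then -e₁ < ξ < -e₂, and: C_n(x) < x for x < -e₁; C_n(x) > x for -e₁ < x < ξ; C_n(x) < x for ξ < x < -e₂; C_n(x) > x for -e₂ < x < 0; and C_n(x) < x for x > 0. -/

import Mathlib

/-- The Chebyshev's method applied to `z·e^{z^n}`, restricted to the real line. -/
noncomputable def CnR (n : ℕ) (x : ℝ) : ℝ :=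
  (n:ℝ) * x^(n+1) * (2*(n:ℝ)^2*x^(2*n) + 3*(n:ℝ)*x^n - (n:ℝ) + 1) /
    (2 * ((n:ℝ)*x^n + 1)^3)

lemma opow_lt_iff {n : ℕ} (h : Odd n) {x y : ℝ} : x ^ n < y ^ n ↔ x < y := by
  simpa using h.strictMono_pow.lt_iff_lt (a := x) (b := y)

/-- For odd `n ≥ 3`, with `-e₁ < -e₂ < 0` the two real extraneous fixed points of
`C_n` and `ξ` the real pole of `C_n`, one has `-e₁ < ξ < -e₂`, and the comparison
of `C_n(x)` with `x` on the real line follows the stated sign pattern. -/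
theorem Cn_real_sign_pattern (n : ℕ) (hn : 3 ≤ n) (hodd : Odd n)
    (e₁ e₂ ξ : ℝ) (he₂ : 0 < e₂) (he : e₂ < e₁)
    (hfix1 : 3*(n:ℝ)^2*(-e₁)^(2*n) + (n:ℝ)*((n:ℝ)+5)*(-e₁)^n + 2 = 0)
    (hfix2 : 3*(n:ℝ)^2*(-e₂)^(2*n) + (n:ℝ)*((n:ℝ)+5)*(-e₂)^n + 2 = 0)
    (hξ : ξ^n = -1/(n:ℝ)) :
    (-e₁ < ξ ∧ ξ < -e₂) ∧
    (∀ x : ℝ, x < -e₁ → CnR n x < x) ∧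
    (∀ x : ℝ, -e₁ < x → x < ξ → x < CnR n x) ∧
    (∀ x : ℝ, ξ < x → x < -e₂ → CnR n x < x) ∧
    (∀ x : ℝ, -e₂ < x → x < 0 → x < CnR n x) ∧
    (∀ x : ℝ, 0 < x → CnR n x < x) := by
  have hN3 : (3:ℝ) ≤ (n:ℝ) := by exact_mod_cast hn
  set N : ℝ := (n:ℝ) with hNdef
  have hN0 : 0 < N := by linarith
  set a : ℝ := (-e₁)^n with hadef
  set b : ℝ := (-e₂)^n with hbdef
  have hab : a < b := (opow_lt_iff hodd).mpr (by linarith)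
  have ha0 : a < 0 := by rw [hadef]; exact hodd.pow_neg (by linarith)
  have hb0 : b < 0 := by rw [hbdef]; exact hodd.pow_neg (by linarith)
  have h2n : ∀ y : ℝ, y^(2*n) = (y^n)^2 := fun y => by rw [pow_mul']
  rw [h2n] at hfix1 hfix2
  rw [← hadef] at hfix1
  rw [← hbdef] at hfix2
  clear_value N a b
  have hsum : 3*N^2*(a+b) + N*(N+5) = 0 := by
    have h : (a - b) * (3*N^2*(a+b) + N*(N+5)) = 0 := by linear_combination hfix1 - hfix2
    rcases mul_eq_zero.mp h with h' | h'
    · exact absurd h' (sub_ne_zero.mpr hab.ne)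
    · exact h'
  have hprod : 3*N^2*(a*b) - 2 = 0 := by linear_combination a * hsum - hfix1
  have hw : N * ξ^n + 1 = 0 := by rw [hξ]; field_simp; norm_num
  have hξn0 : ξ^n < 0 := by rw [hξ]; exact div_neg_of_neg_of_pos (by norm_num) hN0
  have hξ0 : ξ < 0 := hodd.pow_neg_iff.mp hξn0
  have hQξ : 3*N^2*(ξ^n - a)*(ξ^n - b) = -N := by
    linear_combination (-(ξ^n))*hsum + hprod + (3*N*ξ^n + N + 2)*hw
  have haξ : a < ξ^n := by
    by_contra hc
    push_neg at hc
    nlinarith [mul_nonneg (by linarith : (0:ℝ) ≤ a - ξ^n) (by linarith : (0:ℝ) ≤ b - ξ^n),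
      mul_pos hN0 hN0]
  have hξb : ξ^n < b := by
    by_contra hc
    push_neg at hc
    nlinarith [mul_nonneg (by linarith : (0:ℝ) ≤ ξ^n - a) (by linarith : (0:ℝ) ≤ ξ^n - b),
      mul_pos hN0 hN0]
  have hξ1 : -e₁ < ξ := by rw [hadef] at haξ; exact (opow_lt_iff hodd).mp haξ
  have hξ2 : ξ < -e₂ := by rw [hbdef] at hξb; exact (opow_lt_iff hodd).mp hξb
  have key : ∀ x : ℝ, (N*x^n + 1) ≠ 0 →
      CnR n x - x = (-(3*N^2) * (x * ((x^n - a)*(x^n - b)))) / (2*(N*x^n+1)^3) := by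
    intro x hd
    have hD : (2*(N*x^n+1)^3) ≠ 0 := by positivity
    rw [CnR, ← hNdef, div_sub' hD]
    congr 1
    rw [h2n]
    linear_combination (-(x*x^n))*hsum + x*hprod
  have hden_pos : ∀ x : ℝ, ξ < x → 0 < N*x^n + 1 := by
    intro x hx
    have h1 : ξ^n < x^n := (opow_lt_iff hodd).mpr hx
    nlinarith
  have hden_neg : ∀ x : ℝ, x < ξ → N*x^n + 1 < 0 := by
    intro x hx
    have h1 : x^n < ξ^n := (opow_lt_iff hodd).mpr hx
    nlinarith
  refine ⟨⟨hξ1, hξ2⟩, ?_, ?_, ?_, ?_, ?_⟩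
  · -- x < -e₁ : CnR x < x
    intro x hx
    have hxξ : x < ξ := hx.trans hξ1
    have hd := hden_neg x hxξ
    have hxa : x^n < a := by rw [hadef]; exact (opow_lt_iff hodd).mpr hx
    have hx0 : x < 0 := by linarith
    have P : 0 < (a - x^n)*(b - x^n) := mul_pos (by linarith) (by linarith)
    have hnum : 0 < -(3*N^2) * (x * ((x^n - a)*(x^n - b))) := by
      have he : -(3*N^2) * (x * ((x^n - a)*(x^n - b)))
          = (3*N^2) * ((a - x^n)*(b - x^n) * (-x)) := by ring
      rw [he]
      exact mul_pos (mul_pos (by norm_num) (pow_pos hN0 2)) (mul_pos P (neg_pos.mpr hx0))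
    have hD : (2*(N*x^n+1)^3) < 0 := by
      have := Odd.pow_neg (by decide : Odd 3) hd
      linarith
    have hk := key x hd.ne
    linarith [div_neg_of_pos_of_neg hnum hD]
  · -- -e₁ < x < ξ : x < CnR x
    intro x hx1 hx2
    have hd := hden_neg x hx2
    have hxa : a < x^n := by rw [hadef]; exact (opow_lt_iff hodd).mpr hx1
    have hxb : x^n < b := ((opow_lt_iff hodd).mpr hx2).trans hξb
    have hx0 : x < 0 := by linarith
    have P : 0 < (x^n - a)*(b - x^n) := mul_pos (by linarith) (by linarith)
    have hnum : -(3*N^2) * (x * ((x^n - a)*(x^n - b))) < 0 := by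
      have he : -(3*N^2) * (x * ((x^n - a)*(x^n - b)))
          = -((3*N^2) * ((x^n - a)*(b - x^n) * (-x))) := by ring
      rw [he, neg_neg_iff_pos]
      exact mul_pos (mul_pos (by norm_num) (pow_pos hN0 2)) (mul_pos P (neg_pos.mpr hx0))
    have hD : (2*(N*x^n+1)^3) < 0 := by
      have := Odd.pow_neg (by decide : Odd 3) hd
      linarith
    have hk := key x hd.ne
    linarith [div_pos_of_neg_of_neg hnum hD]
  · -- ξ < x < -e₂ : CnR x < x
    intro x hx1 hx2
    have hd := hden_pos x hx1
    have hxa : a < x^n := haξ.trans ((opow_lt_iff hodd).mpr hx1)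
    have hxb : x^n < b := by rw [hbdef]; exact (opow_lt_iff hodd).mpr hx2
    have hx0 : x < 0 := by linarith
    have P : 0 < (x^n - a)*(b - x^n) := mul_pos (by linarith) (by linarith)
    have hnum : -(3*N^2) * (x * ((x^n - a)*(x^n - b))) < 0 := by
      have he : -(3*N^2) * (x * ((x^n - a)*(x^n - b)))
          = -((3*N^2) * ((x^n - a)*(b - x^n) * (-x))) := by ring
      rw [he, neg_neg_iff_pos]
      exact mul_pos (mul_pos (by norm_num) (pow_pos hN0 2)) (mul_pos P (neg_pos.mpr hx0))
    have hD : 0 < (2*(N*x^n+1)^3) := by positivity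
    have hk := key x hd.ne'
    linarith [div_neg_of_neg_of_pos hnum hD]
  · -- -e₂ < x < 0 : x < CnR x
    intro x hx1 hx2
    have hxξ : ξ < x := hξ2.trans hx1
    have hd := hden_pos x hxξ
    have hxb : b < x^n := by rw [hbdef]; exact (opow_lt_iff hodd).mpr hx1
    have hxa : a < x^n := hab.trans hxb
    have P : 0 < (x^n - a)*(x^n - b) := mul_pos (by linarith) (by linarith)
    have hnum : 0 < -(3*N^2) * (x * ((x^n - a)*(x^n - b))) := by
      have he : -(3*N^2) * (x * ((x^n - a)*(x^n - b)))
          = (3*N^2) * ((x^n - a)*(x^n - b) * (-x)) := by ring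
      rw [he]
      exact mul_pos (mul_pos (by norm_num) (pow_pos hN0 2)) (mul_pos P (neg_pos.mpr hx2))
    have hD : 0 < (2*(N*x^n+1)^3) := by positivity
    have hk := key x hd.ne'
    linarith [div_pos hnum hD]
  · -- 0 < x : CnR x < x
    intro x hx
    have hxξ : ξ < x := hξ0.trans hx
    have hd := hden_pos x hxξ
    have hxp : 0 < x^n := hodd.pow_pos_iff.mpr hx
    have P : 0 < (x^n - a)*(x^n - b) := mul_pos (by linarith) (by linarith)
    have hnum : -(3*N^2) * (x * ((x^n - a)*(x^n - b))) < 0 := by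
      have he : -(3*N^2) * (x * ((x^n - a)*(x^n - b)))
          = -((3*N^2) * ((x^n - a)*(x^n - b) * x)) := by ring
      rw [he, neg_neg_iff_pos]
      exact mul_pos (mul_pos (by norm_num) (pow_pos hN0 2)) (mul_pos P hx)
    have hD : 0 < (2*(N*x^n+1)^3) := by positivity
    have hk := key x hd.ne'
    linarith [div_neg_of_neg_of_pos hnum hD]
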